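/- Let real numbers a_0, ..., a_n ≥ 1 and d_0 > d_1 > ... > d_n ≥ 0 and r_0, ..., r_n ≥ 0 satisfy: r_i ≤ d_i/2 + 1 for all i, d_{i−1} − d_i ≥ 2 for all i ≥ 1, h ≤ Σ_{i=0}^n a_i r_i, S ≥ 2a_0 d_0 + Σ_{i=1}^n a_i(d_{i−1} + d_i) − 2d_0, and 2a_0 + Σ_{i=1}^n a_i − 2 ≤ S/d_0. Then h ≤ (1/4 + 1/(2d_0))·S + d_0/2 + 1 (assuming d_0 ≥ 2). -/

import Mathlib

/-- the numerical core of the relative Noether inequality in the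
hyperelliptic even-degree case. -/
theorem numerical_core (n : ℕ) (a d r : ℕ → ℝ) (h S : ℝ)
    (ha : ∀ i ≤ n, 1 ≤ a i)
    (hdec : ∀ i, 1 ≤ i → i ≤ n → d i < d (i - 1))
    (hdn : 0 ≤ d n)
    (hr0 : ∀ i ≤ n, 0 ≤ r i)
    (hr : ∀ i ≤ n, r i ≤ d i / 2 + 1)
    (hgap : ∀ i, 1 ≤ i → i ≤ n → 2 ≤ d (i - 1) - d i)
    (hh : h ≤ ∑ i ∈ Finset.range (n + 1), a i * r i)
    (hS : 2 * a 0 * d 0 + (∑ i ∈ Finset.Icc 1 n, a i * (d (i - 1) + d i)) - 2 * d 0 ≤ S)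
    (hsum : 2 * a 0 + (∑ i ∈ Finset.Icc 1 n, a i) - 2 ≤ S / d 0)
    (hd0 : 2 ≤ d 0) :
    h ≤ (1/4 + 1/(2 * d 0)) * S + d 0 / 2 + 1 := by
  have hd0pos : (0:ℝ) < d 0 := by linarith
  have hd0ne : d 0 ≠ 0 := ne_of_gt hd0pos
  have hstep1 : h ≤ ∑ i ∈ Finset.range (n + 1), a i * (d i / 2 + 1) := by
    refine hh.trans (Finset.sum_le_sum ?_)
    intro i hi
    rw [Finset.mem_range, Nat.lt_succ_iff] at hi
    have h1 := ha i hi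
    have h2 := hr i hi
    have h3 := hr0 i hi
    nlinarith
  have hsplit : ∑ i ∈ Finset.range (n + 1), a i * (d i / 2 + 1)
      = a 0 * (d 0 / 2 + 1) + ∑ i ∈ Finset.Icc 1 n, a i * (d i / 2 + 1) := by
    have hset : Finset.range (n + 1) = insert 0 (Finset.Icc 1 n) := by
      ext x; simp [Finset.mem_Icc, Nat.lt_succ_iff]; omega
    rw [hset, Finset.sum_insert (by simp)]
  have hstep2 : ∑ i ∈ Finset.Icc 1 n, a i * (d i / 2 + 1)
      ≤ (∑ i ∈ Finset.Icc 1 n, a i * (d (i - 1) + d i)) / 4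
        + (∑ i ∈ Finset.Icc 1 n, a i) / 2 := by
    rw [Finset.sum_div, Finset.sum_div, ← Finset.sum_add_distrib]
    refine Finset.sum_le_sum ?_
    intro i hi
    rw [Finset.mem_Icc] at hi
    have h1 := ha i hi.2
    have h2 := hgap i hi.1 hi.2
    nlinarith
  have hgoal : (1/4 + 1/(2 * d 0)) * S = S / 4 + (S / d 0) / 2 := by
    field_simp
  have hexp : a 0 * (d 0 / 2 + 1) = (2 * a 0 * d 0) / 4 + a 0 := by ring
  rw [hgoal]
  linarith [hstep1.trans_eq hsplit]
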